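/- For all natural numbers r, c, v with 2 ≤ r, 2 ≤ c and 2rc − c ≤ 2v, v ≤ rc, there exists an (r × c, v)-near triple array. -/

import Mathlib

open Finset

/-- An `r × c` row-column design on `v` symbols is binary if no symbol occurs
twice in any row or in any column. -/
def IsBinaryDesign {r c v : ℕ} (T : Fin r × Fin c → Fin v) : Prop :=
  (∀ (i : Fin r) (j j' : Fin c), j ≠ j' → T (i, j) ≠ T (i, j')) ∧
  (∀ (j : Fin c) (i i' : Fin r), i ≠ i' → T (i, j) ≠ T (i', j))

/-- The replication number of a symbol `s`: the number of cells containing `s`. -/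
def replNum {r c v : ℕ} (T : Fin r × Fin c → Fin v) (s : Fin v) : ℕ :=
  (Finset.univ.filter (fun p : Fin r × Fin c => T p = s)).card

/-- The average replication number `e = rc/v` as a rational number. -/
def avgRepl (r c v : ℕ) : ℚ := ((r : ℚ) * (c : ℚ)) / (v : ℚ)

/-- A design is equireplicate if `e = rc/v` is an integer and every symbol has
replication number `e`. -/
def IsEquireplicate {r c v : ℕ} (T : Fin r × Fin c → Fin v) : Prop :=
  (avgRepl r c v).den = 1 ∧ ∀ s : Fin v, (replNum T s : ℚ) = avgRepl r c v

/-- A design is near equireplicate if `e = rc/v` is not an integer and every symbol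
has replication number `⌊e⌋` or `⌈e⌉`. -/
def IsNearEquireplicate {r c v : ℕ} (T : Fin r × Fin c → Fin v) : Prop :=
  (avgRepl r c v).den ≠ 1 ∧
  ∀ s : Fin v, (replNum T s : ℤ) = ⌊avgRepl r c v⌋ ∨ (replNum T s : ℤ) = ⌈avgRepl r c v⌉

/-- The set of symbols occurring in row `i`. -/
def rowSet {r c v : ℕ} (T : Fin r × Fin c → Fin v) (i : Fin r) : Finset (Fin v) :=
  Finset.univ.image (fun j : Fin c => T (i, j))

/-- The set of symbols occurring in column `j`. -/
def colSet {r c v : ℕ} (T : Fin r × Fin c → Fin v) (j : Fin c) : Finset (Fin v) :=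
  Finset.univ.image (fun i : Fin r => T (i, j))

/-- Average row-column intersection size `λ_rc`. -/
def lamRC {r c v : ℕ} (T : Fin r × Fin c → Fin v) : ℚ :=
  (∑ i : Fin r, ∑ j : Fin c, ((rowSet T i ∩ colSet T j).card : ℚ)) / ((r : ℚ) * (c : ℚ))

/-- Average row-row intersection size `λ_rr`. -/
def lamRR {r c v : ℕ} (T : Fin r × Fin c → Fin v) : ℚ :=
  (∑ p ∈ Finset.univ.filter (fun p : Fin r × Fin r => p.1 < p.2),
      ((rowSet T p.1 ∩ rowSet T p.2).card : ℚ)) / ((r : ℚ) * ((r : ℚ) - 1) / 2)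

/-- Average column-column intersection size `λ_cc`. -/
def lamCC {r c v : ℕ} (T : Fin r × Fin c → Fin v) : ℚ :=
  (∑ p ∈ Finset.univ.filter (fun p : Fin c × Fin c => p.1 < p.2),
      ((colSet T p.1 ∩ colSet T p.2).card : ℚ)) / ((c : ℚ) * ((c : ℚ) - 1) / 2)

/-- An `(r × c, v)`-near triple array. -/
def IsNearTripleArray {r c v : ℕ} (T : Fin r × Fin c → Fin v) : Prop :=
  IsBinaryDesign T ∧ (IsEquireplicate T ∨ IsNearEquireplicate T) ∧
  (∀ (i : Fin r) (j : Fin c),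
    ((rowSet T i ∩ colSet T j).card : ℤ) = ⌊lamRC T⌋ ∨
    ((rowSet T i ∩ colSet T j).card : ℤ) = ⌈lamRC T⌉) ∧
  (∀ i j : Fin r, i ≠ j →
    ((rowSet T i ∩ rowSet T j).card : ℤ) = ⌊lamRR T⌋ ∨
    ((rowSet T i ∩ rowSet T j).card : ℤ) = ⌈lamRR T⌉) ∧
  (∀ i j : Fin c, i ≠ j →
    ((colSet T i ∩ colSet T j).card : ℤ) = ⌊lamCC T⌋ ∨
    ((colSet T i ∩ colSet T j).card : ℤ) = ⌈lamCC T⌉)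



/-- If all values of `t` on `s` are `m` or `m+1`, then each value equals the floor or
ceiling of the average. -/
lemma avg_mem_floor_ceil {α : Type*} {s : Finset α} (t : α → ℕ) (m : ℕ)
    (h : ∀ a ∈ s, t a = m ∨ t a = m + 1) {a : α} (ha : a ∈ s) :
    ((t a : ℤ) = ⌊(∑ b ∈ s, (t b : ℚ)) / (s.card : ℚ)⌋ ∨
     (t a : ℤ) = ⌈(∑ b ∈ s, (t b : ℚ)) / (s.card : ℚ)⌉) := by
  have hn : 0 < s.card := Finset.card_pos.mpr ⟨a, ha⟩
  have hnQ : (0:ℚ) < (s.card : ℚ) := by exact_mod_cast hn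
  set q : ℚ := (∑ b ∈ s, (t b : ℚ)) / (s.card : ℚ) with hq
  by_cases hall1 : ∀ b ∈ s, t b = m
  · have hsum : (∑ b ∈ s, (t b : ℚ)) = (m : ℚ) * s.card := by
      rw [Finset.sum_congr rfl (fun b hb => by rw [hall1 b hb])]
      rw [Finset.sum_const, nsmul_eq_mul]; ring
    have hqm : q = (m : ℚ) := by rw [hq, hsum, mul_div_assoc, div_self (ne_of_gt hnQ), mul_one]
    left
    rw [hall1 a ha, hqm]
    simp
  · by_cases hall2 : ∀ b ∈ s, t b = m + 1
    · have hsum : (∑ b ∈ s, (t b : ℚ)) = ((m:ℚ)+1) * s.card := by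
        rw [Finset.sum_congr rfl (fun b hb => by rw [hall2 b hb])]
        rw [Finset.sum_const, nsmul_eq_mul]; push_cast; ring
      have hqm : q = (m : ℚ) + 1 := by rw [hq, hsum, mul_div_assoc, div_self (ne_of_gt hnQ), mul_one]
      right
      rw [hall2 a ha, hqm]
      rw [show ((m:ℚ)+1) = (((m:ℤ)+1 : ℤ) : ℚ) by push_cast; ring, Int.ceil_intCast]
      push_cast; ring
    · -- mixed case: m < q < m + 1
      push_neg at hall1 hall2
      obtain ⟨b1, hb1, hb1'⟩ := hall1
      obtain ⟨b2, hb2, hb2'⟩ := hall2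
      have hb1v : t b1 = m + 1 := (h b1 hb1).resolve_left hb1'
      have hb2v : t b2 = m := (h b2 hb2).resolve_right hb2'
      have hlow : (m : ℚ) * s.card < ∑ b ∈ s, (t b : ℚ) := by
        rw [show (m:ℚ) * s.card = ∑ _b ∈ s, (m:ℚ) by
          rw [Finset.sum_const, nsmul_eq_mul]; ring]
        refine Finset.sum_lt_sum (fun i hi => ?_) ⟨b1, hb1, ?_⟩
        · rcases h i hi with h' | h' <;> simp [h']
        · rw [hb1v]; push_cast; linarith
      have hhigh : (∑ b ∈ s, (t b : ℚ)) < ((m:ℚ)+1) * s.card := by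
        rw [show ((m:ℚ)+1) * s.card = ∑ _b ∈ s, ((m:ℚ)+1) by
          rw [Finset.sum_const, nsmul_eq_mul]; ring]
        refine Finset.sum_lt_sum (fun i hi => ?_) ⟨b2, hb2, ?_⟩
        · rcases h i hi with h' | h' <;> simp [h']
        · rw [hb2v]; push_cast; linarith
      have hq1 : (m : ℚ) < q := by
        rw [hq, lt_div_iff₀ hnQ]; linarith
      have hq2 : q < (m : ℚ) + 1 := by
        rw [hq, div_lt_iff₀ hnQ]; linarith
      have hfl : ⌊q⌋ = (m : ℤ) := by
        rw [Int.floor_eq_iff]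
        constructor
        · push_cast; linarith
        · push_cast; linarith
      have hcl : ⌈q⌉ = (m : ℤ) + 1 := by
        rw [Int.ceil_eq_iff]
        constructor
        · push_cast; linarith
        · push_cast; linarith
      rcases h a ha with h' | h'
      · left; rw [h', hfl]
      · right; rw [h', hcl]; push_cast; ring

/-- Cardinality of the strictly-lower-triangular pairs. -/
lemma card_filter_lt_q (n : ℕ) :
    (((Finset.univ.filter (fun p : Fin n × Fin n => p.1 < p.2)).card : ℚ)) =
      (n : ℚ) * ((n : ℚ) - 1) / 2 := by
  have key : 2 * (Finset.univ.filter (fun p : Fin n × Fin n => p.1 < p.2)).card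
      = n * n - n := by
    have h1 : (Finset.univ.filter (fun p : Fin n × Fin n => p.1 < p.2)).card
        = (Finset.univ.filter (fun p : Fin n × Fin n => p.2 < p.1)).card := by
      exact Finset.card_bij' (fun p _ => (p.2, p.1)) (fun p _ => (p.2, p.1))
        (fun p hp => by simp only [Finset.mem_filter, Finset.mem_univ, true_and] at hp ⊢; exact hp)
        (fun p hp => by simp only [Finset.mem_filter, Finset.mem_univ, true_and] at hp ⊢; exact hp)
        (fun p _ => rfl) (fun p _ => rfl)
    have h2 : (Finset.univ.filter (fun p : Fin n × Fin n => p.1 < p.2)).card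
        + (Finset.univ.filter (fun p : Fin n × Fin n => p.2 < p.1)).card
        + (Finset.univ.filter (fun p : Fin n × Fin n => p.1 = p.2)).card = n * n := by
      rw [← Finset.card_union_of_disjoint, ← Finset.card_union_of_disjoint]
      · have : (Finset.univ.filter (fun p : Fin n × Fin n => p.1 < p.2) ∪
            Finset.univ.filter (fun p : Fin n × Fin n => p.2 < p.1)) ∪
            Finset.univ.filter (fun p : Fin n × Fin n => p.1 = p.2) = Finset.univ := by
          ext p
          simp only [Finset.mem_union, Finset.mem_filter, Finset.mem_univ, true_and, iff_true]
          rcases lt_trichotomy p.1 p.2 with h | h | h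
          · exact Or.inl (Or.inl h)
          · exact Or.inr h
          · exact Or.inl (Or.inr h)
        rw [this]
        simp [Finset.card_univ]
      · rw [Finset.disjoint_left]
        intro p hp hp'
        simp only [Finset.mem_union, Finset.mem_filter, Finset.mem_univ, true_and] at hp hp'
        rcases hp with h | h <;> rw [hp'] at h <;> exact lt_irrefl _ h
      · rw [Finset.disjoint_left]
        intro p hp hp'
        simp only [Finset.mem_filter, Finset.mem_univ, true_and] at hp hp'
        exact absurd (hp.trans hp') (lt_irrefl _)
    have h3 : (Finset.univ.filter (fun p : Fin n × Fin n => p.1 = p.2)).card = n := by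
      have himg : (Finset.univ.filter (fun p : Fin n × Fin n => p.1 = p.2))
          = Finset.univ.image (fun i : Fin n => (i, i)) := by
        ext p
        simp only [Finset.mem_filter, Finset.mem_univ, true_and, Finset.mem_image]
        constructor
        · intro h; exact ⟨p.1, Prod.ext rfl h⟩
        · rintro ⟨i, rfl⟩; rfl
      rw [himg, Finset.card_image_of_injective _ (fun a b h => (Prod.ext_iff.mp h).1)]
      simp
    omega
  have hn1 : n ≤ n * n := by nlinarith
  have : ((n * n - n : ℕ) : ℚ) = (n:ℚ) * (n:ℚ) - n := by
    push_cast [Nat.cast_sub hn1]; ring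
  have key2 : 2 * (((Finset.univ.filter (fun p : Fin n × Fin n => p.1 < p.2)).card : ℚ))
      = (n:ℚ) * (n:ℚ) - n := by
    rw [← this]
    exact_mod_cast congrArg (Nat.cast : ℕ → ℚ) key
  linarith

lemma card_range_filter_mod {P : ℕ} (hP : 0 < P) (idx : ℕ) (hidx : idx < P) (d : ℕ) :
    ((Finset.range d).filter (fun k => k % P = idx)).card
      = d / P + (if idx < d % P then 1 else 0) := by
  induction d with
  | zero => simp
  | succ d ih =>
    rw [Finset.range_add_one, Finset.filter_insert]
    have hd : P * (d / P) + d % P = d := Nat.div_add_mod d P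
    have hs : d % P < P := Nat.mod_lt _ hP
    have key : ((d + 1) / P = d / P + 1 ∧ (d + 1) % P = 0 ∧ d % P + 1 = P) ∨
        ((d + 1) / P = d / P ∧ (d + 1) % P = d % P + 1 ∧ d % P + 1 < P) := by
      by_cases hcase : d % P + 1 = P
      · left
        have hrw : d + 1 = P * (d / P) + P := by omega
        refine ⟨?_, ?_, hcase⟩
        · rw [hrw, Nat.mul_add_div hP, Nat.div_self hP]
        · rw [hrw, Nat.mul_add_mod, Nat.mod_self]
      · right
        have hlt : d % P + 1 < P := by omega
        have hrw : d + 1 = P * (d / P) + (d % P + 1) := by omega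
        refine ⟨?_, ?_, hlt⟩
        · rw [hrw, Nat.mul_add_div hP, Nat.div_eq_of_lt hlt, Nat.add_zero]
        · rw [hrw, Nat.mul_add_mod, Nat.mod_eq_of_lt hlt]
    by_cases h : d % P = idx
    · rw [if_pos h, Finset.card_insert_of_notMem (by simp), ih]
      rcases key with ⟨e1, e2, e3⟩ | ⟨e1, e2, e3⟩ <;> rw [e1, e2] <;> split_ifs <;> omega
    · rw [if_neg h, ih]
      rcases key with ⟨e1, e2, e3⟩ | ⟨e1, e2, e3⟩ <;> rw [e1, e2] <;> split_ifs <;> omega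

lemma card_filter_val_lt (n m : ℕ) (h : m ≤ n) :
    ((Finset.univ : Finset (Fin n)).filter (fun j : Fin n => (j : ℕ) < m)).card = m := by
  rw [← Finset.card_range m]
  exact Finset.card_bij' (fun j _ => (j : ℕ))
    (fun k hk => ⟨k, lt_of_lt_of_le (Finset.mem_range.mp hk) h⟩)
    (fun j hj => Finset.mem_range.mpr (by simpa using hj))
    (fun k hk => by simp [Finset.mem_range.mp hk])
    (fun j _ => Fin.val_injective rfl)
    (fun k _ => rfl)

lemma card_filter_val_ge (n m : ℕ) (h : m ≤ n) :
    ((Finset.univ : Finset (Fin n)).filter (fun j : Fin n => m ≤ (j : ℕ))).card = n - m := by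
  have hc : (Finset.univ.filter (fun j : Fin n => m ≤ (j : ℕ)))
      = (Finset.univ.filter (fun j : Fin n => (j : ℕ) < m))ᶜ := by
    ext j; simp [not_lt]
  rw [hc, Finset.card_compl, card_filter_val_lt n m h]
  simp


/-- For all `r, c, v` with `2 ≤ r`, `2 ≤ c`, `2rc − c ≤ 2v` and
`v ≤ rc`, an `(r × c, v)`-near triple array exists. -/
theorem nearTripleArray_exists_tail {r c v : ℕ} (hr : 2 ≤ r) (hc : 2 ≤ c)
    (hv1 : 2 * r * c - c ≤ 2 * v) (hv2 : v ≤ r * c) :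
    ∃ T : Fin r × Fin c → Fin v, IsNearTripleArray T := by
  classical
  -- arithmetic setup
  have hmul : 2 * r * c = 2 * (r * c) := by ring
  have h2c : 2 * c ≤ r * c := Nat.mul_le_mul_right c hr
  set d : ℕ := r * c - v with hd
  have hvd : v + d = r * c := by omega
  have hd2 : 2 * d ≤ c := by omega
  have hdv2 : d + 2 ≤ v := by omega
  have hv0 : 0 < v := by omega
  -- pair enumeration
  set L : List (Fin r × Fin r) :=
    (Finset.univ.filter (fun p : Fin r × Fin r => p.1 < p.2)).toList with hLdef
  have hLnodup : L.Nodup := Finset.nodup_toList _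
  have hmemL : ∀ p : Fin r × Fin r, p ∈ L ↔ p.1 < p.2 := by
    intro p
    rw [hLdef, Finset.mem_toList, Finset.mem_filter]
    simp
  have hP0 : 0 < L.length := by
    rw [List.length_pos_iff]
    intro hnil
    have h01 : ((⟨0, by omega⟩ : Fin r), (⟨1, by omega⟩ : Fin r)) ∈ L :=
      (hmemL _).mpr (by simp [Fin.lt_def])
    rw [hnil] at h01
    simp at h01
  set pairf : ℕ → Fin r × Fin r := fun k => L.get ⟨k % L.length, Nat.mod_lt _ hP0⟩ with hpairf
  have hpairf_eval : ∀ k : ℕ, pairf k = L.get ⟨k % L.length, Nat.mod_lt _ hP0⟩ := fun k => by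
    rw [hpairf]
  have hab : ∀ k : ℕ, (pairf k).1 < (pairf k).2 := fun k => by
    rw [hpairf_eval]
    exact (hmemL _).mp (List.get_mem L _)
  -- the double cells
  set rowOf : Fin c → Fin r := fun j =>
    if (j : ℕ) % 2 = 0 then (pairf ((j : ℕ) / 2)).1 else (pairf ((j : ℕ) / 2)).2 with hrowOfdef
  have hrowOf_eval : ∀ j : Fin c, rowOf j =
      if (j : ℕ) % 2 = 0 then (pairf ((j : ℕ) / 2)).1 else (pairf ((j : ℕ) / 2)).2 := fun j => by
    rw [hrowOfdef]
  set A : Finset (Fin r × Fin c) :=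
    Finset.univ.filter (fun p => (p.2 : ℕ) < 2 * d ∧ p.1 = rowOf p.2) with hA
  have hmemA : ∀ p : Fin r × Fin c, p ∈ A ↔ ((p.2 : ℕ) < 2 * d ∧ p.1 = rowOf p.2) := by
    intro p
    rw [hA, Finset.mem_filter]
    simp
  have hcardA : A.card = 2 * d := by
    have himg : A = (Finset.univ.filter (fun j : Fin c => (j : ℕ) < 2 * d)).image
        (fun j => (rowOf j, j)) := by
      ext p
      rw [hmemA]
      simp only [Finset.mem_image, Finset.mem_filter, Finset.mem_univ, true_and]
      constructor
      · rintro ⟨h1, h2⟩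
        exact ⟨p.2, h1, by rw [← h2]⟩
      · rintro ⟨j, hj, rfl⟩
        exact ⟨hj, rfl⟩
    rw [himg, Finset.card_image_of_injective _ (fun a b h => congrArg Prod.snd h),
      card_filter_val_lt c (2 * d) hd2]
  set B : Finset (Fin v) := Finset.univ.filter (fun s : Fin v => d ≤ (s : ℕ)) with hB
  have hcardB : B.card = v - d := by
    rw [hB]; exact card_filter_val_ge v d (by omega)
  have hcardAc : Aᶜ.card = v - d := by
    rw [Finset.card_compl, hcardA]
    have : Fintype.card (Fin r × Fin c) = r * c := by simp
    rw [this]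
    omega
  set e : {x // x ∈ Aᶜ} ≃ {x // x ∈ B} := Finset.equivOfCardEq (hcardAc.trans hcardB.symm)
    with hedef
  -- the design
  have hmemB : ∀ s : Fin v, s ∈ B ↔ d ≤ (s : ℕ) := by
    intro s
    rw [hB, Finset.mem_filter]
    simp
  set T : Fin r × Fin c → Fin v := fun p =>
    if h : p ∈ A then ⟨(p.2 : ℕ) / 2, by
      have h2 := ((hmemA p).mp h).1
      omega⟩
    else ((e ⟨p, Finset.mem_compl.mpr h⟩ : {x // x ∈ B}) : Fin v) with hT
  have hTA : ∀ p (hp : p ∈ A), ((T p : ℕ)) = (p.2 : ℕ) / 2 := by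
    intro p hp
    simp only [hT]
    rw [dif_pos hp]
  have hTAc : ∀ p (hp : p ∉ A),
      T p = ((e ⟨p, Finset.mem_compl.mpr hp⟩ : {x // x ∈ B}) : Fin v) := by
    intro p hp
    simp only [hT]
    rw [dif_neg hp]
  have hTAcB : ∀ p (hp : p ∉ A), d ≤ ((T p : ℕ)) := by
    intro p hp
    rw [hTAc p hp]
    have h3 : ((e ⟨p, Finset.mem_compl.mpr hp⟩ : {x // x ∈ B}) : Fin v) ∈ B :=
      (e ⟨p, Finset.mem_compl.mpr hp⟩).2
    exact (hmemB _).mp h3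
  have hTinj : ∀ p q, p ∉ A → q ∉ A → T p = T q → p = q := by
    intro p q hp hq h
    rw [hTAc p hp, hTAc q hq] at h
    have h2 := e.injective (Subtype.ext h)
    exact congrArg Subtype.val h2
  -- fibers
  have hfiber_lt : ∀ (s : Fin v), (s : ℕ) < d → ∀ p : Fin r × Fin c,
      (T p = s ↔ (((p.2 : ℕ) = 2 * (s : ℕ) ∨ (p.2 : ℕ) = 2 * (s : ℕ) + 1) ∧ p.1 = rowOf p.2)) := by
    intro s hs p
    constructor
    · intro hTp
      by_cases hp : p ∈ A
      · have h1 := (hmemA p).mp hp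
        have h2 := hTA p hp
        rw [hTp] at h2
        exact ⟨by omega, h1.2⟩
      · have h3 := hTAcB p hp
        rw [hTp] at h3
        omega
    · rintro ⟨h1, h2⟩
      have hpA : p ∈ A := (hmemA p).mpr ⟨by omega, h2⟩
      have h3 := hTA p hpA
      exact Fin.val_injective (by omega : ((T p : ℕ)) = (s : ℕ))
  have hsingle : ∀ (s : Fin v), d ≤ (s : ℕ) → ∃ p0 : Fin r × Fin c, ∀ p, (T p = s ↔ p = p0) := by
    intro s hs
    have hsB : s ∈ B := (hmemB s).mpr hs
    refine ⟨(e.symm ⟨s, hsB⟩).val, ?_⟩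
    have hp0 : (e.symm ⟨s, hsB⟩).val ∉ A := Finset.mem_compl.mp (e.symm ⟨s, hsB⟩).2
    intro p
    constructor
    · intro hTp
      by_cases hp : p ∈ A
      · have h2 := hTA p hp
        have h1 := ((hmemA p).mp hp).1
        rw [hTp] at h2
        omega
      · have h2 := hTAc p hp
        have h3 : (e ⟨p, Finset.mem_compl.mpr hp⟩ : {x // x ∈ B}) = ⟨s, hsB⟩ :=
          Subtype.ext (by rw [← h2, hTp])
        have h4 : (⟨p, Finset.mem_compl.mpr hp⟩ : {x // x ∈ Aᶜ}) = e.symm ⟨s, hsB⟩ := by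
          rw [← h3, Equiv.symm_apply_apply]
        exact congrArg Subtype.val h4
    · rintro rfl
      rw [hTAc _ hp0]
      have h5 : (⟨(e.symm ⟨s, hsB⟩).val, Finset.mem_compl.mpr hp0⟩ : {x // x ∈ Aᶜ})
          = e.symm ⟨s, hsB⟩ := Subtype.ext rfl
      rw [h5, Equiv.apply_symm_apply]
  choose p0f hp0f using hsingle
  -- row/column membership characterizations
  have hrow_mem : ∀ (s : Fin v) (i : Fin r), s ∈ rowSet T i ↔ ∃ j, T (i, j) = s := by
    intro s i
    simp [rowSet, Finset.mem_image]
  have hcol_mem : ∀ (s : Fin v) (j : Fin c), s ∈ colSet T j ↔ ∃ i, T (i, j) = s := by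
    intro s j
    simp [colSet, Finset.mem_image]
  have hrowOf_even : ∀ (j : Fin c) (k : ℕ), (j : ℕ) = 2 * k → rowOf j = (pairf k).1 := by
    intro j k hjk
    rw [hrowOf_eval, if_pos (by omega), show (j : ℕ) / 2 = k by omega]
  have hrowOf_odd : ∀ (j : Fin c) (k : ℕ), (j : ℕ) = 2 * k + 1 → rowOf j = (pairf k).2 := by
    intro j k hjk
    rw [hrowOf_eval, if_neg (by omega), show (j : ℕ) / 2 = k by omega]
  have hrow_lt : ∀ (s : Fin v), (s : ℕ) < d → ∀ i : Fin r,
      (s ∈ rowSet T i ↔ (i = (pairf (s : ℕ)).1 ∨ i = (pairf (s : ℕ)).2)) := by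
    intro s hs i
    rw [hrow_mem]
    constructor
    · rintro ⟨j, hj⟩
      obtain ⟨h1, h2⟩ := (hfiber_lt s hs (i, j)).mp hj
      have h2' : i = rowOf j := h2
      rcases h1 with h1 | h1
      · left; rw [h2', hrowOf_even j (s : ℕ) h1]
      · right; rw [h2', hrowOf_odd j (s : ℕ) h1]
    · intro h
      rcases h with h | h
      · refine ⟨⟨2 * (s : ℕ), by omega⟩, (hfiber_lt s hs _).mpr ⟨Or.inl rfl, ?_⟩⟩
        show i = rowOf _
        rw [hrowOf_even _ (s : ℕ) rfl, h]
      · refine ⟨⟨2 * (s : ℕ) + 1, by omega⟩, (hfiber_lt s hs _).mpr ⟨Or.inr rfl, ?_⟩⟩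
        show i = rowOf _
        rw [hrowOf_odd _ (s : ℕ) rfl, h]
  have hcol_lt : ∀ (s : Fin v), (s : ℕ) < d → ∀ j : Fin c,
      (s ∈ colSet T j ↔ ((j : ℕ) = 2 * (s : ℕ) ∨ (j : ℕ) = 2 * (s : ℕ) + 1)) := by
    intro s hs j
    rw [hcol_mem]
    constructor
    · rintro ⟨i, hi⟩
      exact ((hfiber_lt s hs (i, j)).mp hi).1
    · intro h
      exact ⟨rowOf j, (hfiber_lt s hs (rowOf j, j)).mpr ⟨h, rfl⟩⟩
  have hrow_ge : ∀ (s : Fin v) (hs : d ≤ (s : ℕ)) (i : Fin r),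
      (s ∈ rowSet T i ↔ i = (p0f s hs).1) := by
    intro s hs i
    rw [hrow_mem]
    constructor
    · rintro ⟨j, hj⟩
      exact congrArg Prod.fst ((hp0f s hs (i, j)).mp hj)
    · intro h
      refine ⟨(p0f s hs).2, (hp0f s hs _).mpr ?_⟩
      rw [h]
  have hcol_ge : ∀ (s : Fin v) (hs : d ≤ (s : ℕ)) (j : Fin c),
      (s ∈ colSet T j ↔ j = (p0f s hs).2) := by
    intro s hs j
    rw [hcol_mem]
    constructor
    · rintro ⟨i, hi⟩
      exact congrArg Prod.snd ((hp0f s hs (i, j)).mp hi)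
    · intro h
      refine ⟨(p0f s hs).1, (hp0f s hs _).mpr ?_⟩
      rw [h]
  -- binary design
  have hbin : IsBinaryDesign T := by
    constructor
    · intro i j j' hne hTT
      by_cases hs : ((T (i, j) : ℕ)) < d
      · obtain ⟨h1a, h1b⟩ := (hfiber_lt _ hs (i, j)).mp rfl
        obtain ⟨h2a, h2b⟩ := (hfiber_lt _ hs (i, j')).mp hTT.symm
        replace h1a : (j : ℕ) = 2 * ((T (i, j) : ℕ)) ∨ (j : ℕ) = 2 * ((T (i, j) : ℕ)) + 1 := h1a
        replace h2a : (j' : ℕ) = 2 * ((T (i, j) : ℕ)) ∨ (j' : ℕ) = 2 * ((T (i, j) : ℕ)) + 1 := h2a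
        have hjj' : (j : ℕ) ≠ (j' : ℕ) := fun h => hne (Fin.val_injective h)
        have h1b' : i = rowOf j := h1b
        have h2b' : i = rowOf j' := h2b
        have habs := hab ((T (i, j) : ℕ))
        rcases h1a with h1a | h1a <;> rcases h2a with h2a | h2a
        · exact hjj' (by omega)
        · have e1 := hrowOf_even j _ h1a
          have e2 := hrowOf_odd j' _ h2a
          have hcontr : (pairf ((T (i, j) : ℕ))).1 = (pairf ((T (i, j) : ℕ))).2 := by
            rw [← e1, ← e2, ← h1b', ← h2b']
          rw [hcontr] at habs
          exact lt_irrefl _ habs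
        · have e1 := hrowOf_odd j _ h1a
          have e2 := hrowOf_even j' _ h2a
          have hcontr : (pairf ((T (i, j) : ℕ))).1 = (pairf ((T (i, j) : ℕ))).2 := by
            rw [← e1, ← e2, ← h1b', ← h2b']
          rw [hcontr] at habs
          exact lt_irrefl _ habs
        · exact hjj' (by omega)
      · have hs' : d ≤ ((T (i, j) : ℕ)) := by omega
        have ha := (hp0f _ hs' (i, j)).mp rfl
        have hb := (hp0f _ hs' (i, j')).mp hTT.symm
        exact hne (congrArg Prod.snd (ha.trans hb.symm))
    · intro j i i' hne hTT
      by_cases hs : ((T (i, j) : ℕ)) < d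
      · obtain ⟨h1a, h1b⟩ := (hfiber_lt _ hs (i, j)).mp rfl
        obtain ⟨h2a, h2b⟩ := (hfiber_lt _ hs (i', j)).mp hTT.symm
        have h1b' : i = rowOf j := h1b
        have h2b' : i' = rowOf j := h2b
        exact hne (h1b'.trans h2b'.symm)
      · have hs' : d ≤ ((T (i, j) : ℕ)) := by omega
        have ha := (hp0f _ hs' (i, j)).mp rfl
        have hb := (hp0f _ hs' (i', j)).mp hTT.symm
        exact hne (congrArg Prod.fst (ha.trans hb.symm))
  -- replication numbers
  have hrepl : ∀ s : Fin v, replNum T s = if (s : ℕ) < d then 2 else 1 := by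
    intro s
    by_cases hs : (s : ℕ) < d
    · rw [if_pos hs]
      have h2s : 2 * (s : ℕ) < c := by omega
      have h2s1 : 2 * (s : ℕ) + 1 < c := by omega
      set j1 : Fin c := ⟨2 * (s : ℕ), h2s⟩ with hj1
      set j2 : Fin c := ⟨2 * (s : ℕ) + 1, h2s1⟩ with hj2
      have hq : ∀ p : Fin r × Fin c, (T p = s ↔ p = (rowOf j1, j1) ∨ p = (rowOf j2, j2)) := by
        intro p
        rw [hfiber_lt s hs p]
        constructor
        · rintro ⟨h1 | h1, h2⟩
          · left
            have hp2 : p.2 = j1 := Fin.val_injective h1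
            have hp1 : p.1 = rowOf j1 := by rw [h2, hp2]
            rw [← hp1, ← hp2]
          · right
            have hp2 : p.2 = j2 := Fin.val_injective h1
            have hp1 : p.1 = rowOf j2 := by rw [h2, hp2]
            rw [← hp1, ← hp2]
        · rintro (rfl | rfl)
          · exact ⟨Or.inl rfl, rfl⟩
          · exact ⟨Or.inr rfl, rfl⟩
      have hfil : (Finset.univ.filter (fun p : Fin r × Fin c => T p = s))
          = {(rowOf j1, j1), (rowOf j2, j2)} := by
        ext p
        rw [Finset.mem_filter]
        simp [hq p]
      rw [replNum, hfil, Finset.card_insert_of_notMem, Finset.card_singleton]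
      intro hmem
      rw [Finset.mem_singleton] at hmem
      have := congrArg (fun p : Fin r × Fin c => ((p.2 : ℕ))) hmem
      simp [hj1, hj2] at this
    · rw [if_neg hs]
      have hs' : d ≤ (s : ℕ) := by omega
      have hfil : (Finset.univ.filter (fun p : Fin r × Fin c => T p = s)) = {p0f s hs'} := by
        ext p
        rw [Finset.mem_filter]
        simp [hp0f s hs' p]
      rw [replNum, hfil, Finset.card_singleton]
  -- replication sum and (near-)equireplication
  have hsumN : (∑ s : Fin v, replNum T s) = r * c := by
    have h1 := Finset.card_eq_sum_card_fiberwise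
      (f := T) (s := Finset.univ) (t := Finset.univ) (fun p _ => Finset.mem_univ _)
    have h2 : (Finset.univ : Finset (Fin r × Fin c)).card = r * c := by
      rw [Finset.card_univ]
      simp
    simp only [replNum]
    rw [← h1, h2]
  have havg : (∑ b ∈ (Finset.univ : Finset (Fin v)), ((replNum T b : ℕ) : ℚ))
      / (((Finset.univ : Finset (Fin v)).card : ℚ)) = avgRepl r c v := by
    rw [show (∑ b ∈ (Finset.univ : Finset (Fin v)), ((replNum T b : ℕ) : ℚ))
        = (((∑ s : Fin v, replNum T s : ℕ)) : ℚ) by push_cast; rfl]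
    rw [hsumN, Finset.card_univ, Fintype.card_fin, avgRepl]
    push_cast
    ring
  have hreplfc : ∀ s : Fin v,
      ((replNum T s : ℤ) = ⌊avgRepl r c v⌋ ∨ (replNum T s : ℤ) = ⌈avgRepl r c v⌉) := by
    intro s
    have hkey := avg_mem_floor_ceil (s := (Finset.univ : Finset (Fin v)))
      (fun a => replNum T a) 1
      (fun a _ => by
        show replNum T a = 1 ∨ replNum T a = 1 + 1
        rw [hrepl a]
        split_ifs with h
        · exact Or.inr rfl
        · exact Or.inl rfl)
      (Finset.mem_univ s)
    rwa [havg] at hkey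
  have hcond2 : IsEquireplicate T ∨ IsNearEquireplicate T := by
    by_cases hden : (avgRepl r c v).den = 1
    · left
      refine ⟨hden, fun s => ?_⟩
      have hnum : (((avgRepl r c v).num : ℤ) : ℚ) = avgRepl r c v :=
        (Rat.den_eq_one_iff _).mp hden
      rcases hreplfc s with h | h
      · rw [← hnum, Int.floor_intCast] at h
        rw [← hnum]
        exact_mod_cast h
      · rw [← hnum, Int.ceil_intCast] at h
        rw [← hnum]
        exact_mod_cast h
    · exact Or.inr ⟨hden, hreplfc⟩
  -- the row-column intersection condition
  have hRCval : ∀ (i : Fin r) (j : Fin c),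
      ((rowSet T i ∩ colSet T j).card = 1 ∨ (rowSet T i ∩ colSet T j).card = 2) := by
    intro i j
    have hmem : T (i, j) ∈ rowSet T i ∩ colSet T j :=
      Finset.mem_inter.mpr ⟨(hrow_mem _ _).mpr ⟨j, rfl⟩, (hcol_mem _ _).mpr ⟨i, rfl⟩⟩
    have hsub : rowSet T i ∩ colSet T j ⊆
        {T (i, j), (⟨(j : ℕ) / 2 % v, Nat.mod_lt _ hv0⟩ : Fin v)} := by
      intro s hsmem
      obtain ⟨hsr, hsc⟩ := Finset.mem_inter.mp hsmem
      by_cases hs : (s : ℕ) < d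
      · have hj := (hcol_lt s hs j).mp hsc
        refine Finset.mem_insert.mpr (Or.inr (Finset.mem_singleton.mpr
          (Fin.val_injective ?_)))
        show (s : ℕ) = (j : ℕ) / 2 % v
        have hlt : (j : ℕ) / 2 < v := by omega
        rw [Nat.mod_eq_of_lt hlt]
        omega
      · have hs' : d ≤ (s : ℕ) := by omega
        have h1 := (hrow_ge s hs' i).mp hsr
        have h2 := (hcol_ge s hs' j).mp hsc
        have hp0 : (i, j) = p0f s hs' := Prod.ext h1 h2
        have hTs : T (i, j) = s := (hp0f s hs' (i, j)).mpr hp0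
        exact Finset.mem_insert.mpr (Or.inl hTs.symm)
    have h3 : (rowSet T i ∩ colSet T j).card ≤ 2 :=
      le_trans (Finset.card_le_card hsub)
        (le_trans (Finset.card_insert_le _ _) (by simp))
    have h4 : 1 ≤ (rowSet T i ∩ colSet T j).card := Finset.card_pos.mpr ⟨_, hmem⟩
    omega
  have hlamRC_eq : lamRC T =
      (∑ p ∈ (Finset.univ : Finset (Fin r × Fin c)),
        ((rowSet T p.1 ∩ colSet T p.2).card : ℚ))
      / (((Finset.univ : Finset (Fin r × Fin c)).card : ℚ)) := by
    rw [lamRC]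
    congr 1
    · exact (Fintype.sum_prod_type (fun p : Fin r × Fin c => ((rowSet T p.1 ∩ colSet T p.2).card : ℚ))).symm
    · rw [Finset.card_univ]
      simp
  have hcond3 : ∀ (i : Fin r) (j : Fin c),
      (((rowSet T i ∩ colSet T j).card : ℤ) = ⌊lamRC T⌋ ∨
       ((rowSet T i ∩ colSet T j).card : ℤ) = ⌈lamRC T⌉) := by
    intro i j
    have hkey := avg_mem_floor_ceil (s := (Finset.univ : Finset (Fin r × Fin c)))
      (fun p => (rowSet T p.1 ∩ colSet T p.2).card) 1
      (fun p _ => by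
        show (rowSet T p.1 ∩ colSet T p.2).card = 1 ∨ (rowSet T p.1 ∩ colSet T p.2).card = 1 + 1
        rcases hRCval p.1 p.2 with h | h
        · exact Or.inl h
        · exact Or.inr h)
      (Finset.mem_univ (i, j))
    rw [hlamRC_eq]
    exact hkey
  -- the row-row intersection condition
  have hRRval : ∀ i j : Fin r, i < j →
      ((rowSet T i ∩ rowSet T j).card = d / L.length ∨
       (rowSet T i ∩ rowSet T j).card = d / L.length + 1) := by
    intro i j hij
    have hije : i ≠ j := ne_of_lt hij
    obtain ⟨idx, hidx⟩ := List.mem_iff_get.mp ((hmemL (i, j)).mpr hij)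
    have hiff : ∀ k : ℕ, (pairf k = (i, j) ↔ k % L.length = (idx : ℕ)) := by
      intro k
      constructor
      · intro h
        have h2 : L.get ⟨k % L.length, Nat.mod_lt _ hP0⟩ = L.get idx := by
          rw [hidx, ← hpairf_eval k, h]
        exact congrArg Fin.val ((hLnodup.get_inj_iff).mp h2)
      · intro h
        rw [hpairf_eval k]
        have h2 : (⟨k % L.length, Nat.mod_lt _ hP0⟩ : Fin L.length) = idx :=
          Fin.val_injective h
        rw [h2, hidx]
    have hcard : (rowSet T i ∩ rowSet T j).card
        = ((Finset.range d).filter (fun k => k % L.length = (idx : ℕ))).card := by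
      refine Finset.card_bij' (fun s _ => (s : ℕ))
        (fun k hk => (⟨k, by
          have := Finset.mem_range.mp (Finset.mem_filter.mp hk).1
          omega⟩ : Fin v)) ?_ ?_ ?_ ?_
      · intro s hs
        obtain ⟨h1, h2⟩ := Finset.mem_inter.mp hs
        by_cases hsd : (s : ℕ) < d
        · have ha1 := (hrow_lt s hsd i).mp h1
          have ha2 := (hrow_lt s hsd j).mp h2
          have habs := hab (s : ℕ)
          have hpf : pairf (s : ℕ) = (i, j) := by
            rcases ha1 with h | h <;> rcases ha2 with h' | h'
            · exact absurd (h.trans h'.symm) hije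
            · exact Prod.ext h.symm h'.symm
            · exfalso
              rw [← h, ← h'] at habs
              exact absurd hij (not_lt.mpr habs.le)
            · exact absurd (h.trans h'.symm) hije
          exact Finset.mem_filter.mpr ⟨Finset.mem_range.mpr hsd, (hiff _).mp hpf⟩
        · exfalso
          have hs' : d ≤ (s : ℕ) := by omega
          have hb1 := (hrow_ge s hs' i).mp h1
          have hb2 := (hrow_ge s hs' j).mp h2
          exact hije (hb1.trans hb2.symm)
      · intro k hk
        obtain ⟨hk1, hk2⟩ := Finset.mem_filter.mp hk
        have hkd := Finset.mem_range.mp hk1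
        have hpf : pairf k = (i, j) := (hiff k).mpr hk2
        refine Finset.mem_inter.mpr ⟨?_, ?_⟩
        · refine (hrow_lt _ (show k < d from hkd) i).mpr (Or.inl ?_)
          show i = (pairf k).1
          rw [hpf]
        · refine (hrow_lt _ (show k < d from hkd) j).mpr (Or.inr ?_)
          show j = (pairf k).2
          rw [hpf]
      · intro s hs
        exact Fin.val_injective rfl
      · intro k hk
        rfl
    rw [hcard, card_range_filter_mod hP0 (idx : ℕ) idx.isLt d]
    split_ifs
    · exact Or.inr rfl
    · exact Or.inl rfl
  have hlamRR_eq : lamRR T =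
      (∑ p ∈ Finset.univ.filter (fun p : Fin r × Fin r => p.1 < p.2),
        ((rowSet T p.1 ∩ rowSet T p.2).card : ℚ))
      / (((Finset.univ.filter (fun p : Fin r × Fin r => p.1 < p.2)).card : ℚ)) := by
    rw [lamRR, card_filter_lt_q]
  have hcond4 : ∀ i j : Fin r, i ≠ j →
      (((rowSet T i ∩ rowSet T j).card : ℤ) = ⌊lamRR T⌋ ∨
       ((rowSet T i ∩ rowSet T j).card : ℤ) = ⌈lamRR T⌉) := by
    have key : ∀ i j : Fin r, i < j →
        (((rowSet T i ∩ rowSet T j).card : ℤ) = ⌊lamRR T⌋ ∨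
         ((rowSet T i ∩ rowSet T j).card : ℤ) = ⌈lamRR T⌉) := by
      intro i j hij
      have hkey := avg_mem_floor_ceil
        (s := Finset.univ.filter (fun p : Fin r × Fin r => p.1 < p.2))
        (fun p => (rowSet T p.1 ∩ rowSet T p.2).card) (d / L.length)
        (fun p hp => by
          show (rowSet T p.1 ∩ rowSet T p.2).card = d / L.length ∨
            (rowSet T p.1 ∩ rowSet T p.2).card = d / L.length + 1
          exact hRRval p.1 p.2 (Finset.mem_filter.mp hp).2)
        (Finset.mem_filter.mpr ⟨Finset.mem_univ (i, j), hij⟩)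
      rw [hlamRR_eq]
      exact hkey
    intro i j hne
    rcases lt_or_gt_of_ne hne with h | h
    · exact key i j h
    · rw [Finset.inter_comm (rowSet T i) (rowSet T j)]
      exact key j i h
  -- the column-column intersection condition
  have hCCval : ∀ i j : Fin c, i ≠ j →
      ((colSet T i ∩ colSet T j).card = 0 ∨ (colSet T i ∩ colSet T j).card = 0 + 1) := by
    intro i j hne
    have hle : (colSet T i ∩ colSet T j).card ≤ 1 := by
      rw [Finset.card_le_one]
      intro a ha b hb
      obtain ⟨ha1, ha2⟩ := Finset.mem_inter.mp ha
      obtain ⟨hb1, hb2⟩ := Finset.mem_inter.mp hb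
      have had : (a : ℕ) < d := by
        by_contra hcon
        have h' : d ≤ (a : ℕ) := by omega
        exact hne (((hcol_ge a h' i).mp ha1).trans ((hcol_ge a h' j).mp ha2).symm)
      have hbd : (b : ℕ) < d := by
        by_contra hcon
        have h' : d ≤ (b : ℕ) := by omega
        exact hne (((hcol_ge b h' i).mp hb1).trans ((hcol_ge b h' j).mp hb2).symm)
      have h1 := (hcol_lt a had i).mp ha1
      have h2 := (hcol_lt a had j).mp ha2
      have h3 := (hcol_lt b hbd i).mp hb1
      have h4 := (hcol_lt b hbd j).mp hb2
      have hij : (i : ℕ) ≠ (j : ℕ) := fun h => hne (Fin.val_injective h)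
      exact Fin.val_injective (by omega)
    omega
  have hlamCC_eq : lamCC T =
      (∑ p ∈ Finset.univ.filter (fun p : Fin c × Fin c => p.1 < p.2),
        ((colSet T p.1 ∩ colSet T p.2).card : ℚ))
      / (((Finset.univ.filter (fun p : Fin c × Fin c => p.1 < p.2)).card : ℚ)) := by
    rw [lamCC, card_filter_lt_q]
  have hcond5 : ∀ i j : Fin c, i ≠ j →
      (((colSet T i ∩ colSet T j).card : ℤ) = ⌊lamCC T⌋ ∨
       ((colSet T i ∩ colSet T j).card : ℤ) = ⌈lamCC T⌉) := by
    have key : ∀ i j : Fin c, i < j →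
        (((colSet T i ∩ colSet T j).card : ℤ) = ⌊lamCC T⌋ ∨
         ((colSet T i ∩ colSet T j).card : ℤ) = ⌈lamCC T⌉) := by
      intro i j hij
      have hkey := avg_mem_floor_ceil
        (s := Finset.univ.filter (fun p : Fin c × Fin c => p.1 < p.2))
        (fun p => (colSet T p.1 ∩ colSet T p.2).card) 0
        (fun p hp => by
          show (colSet T p.1 ∩ colSet T p.2).card = 0 ∨
            (colSet T p.1 ∩ colSet T p.2).card = 0 + 1
          exact hCCval p.1 p.2 (ne_of_lt (Finset.mem_filter.mp hp).2))
        (Finset.mem_filter.mpr ⟨Finset.mem_univ (i, j), hij⟩)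
      rw [hlamCC_eq]
      exact hkey
    intro i j hne
    rcases lt_or_gt_of_ne hne with h | h
    · exact key i j h
    · rw [Finset.inter_comm (colSet T i) (colSet T j)]
      exact key j i h
  exact ⟨T, hbin, hcond2, hcond3, hcond4, hcond5⟩
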